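/- Fix β > 0 and G > 0, and let μ be a finite measure on (0,∞). Define g(x) = (∫₀^G ∫ y^β e^{-v(x+y+1)/2} dμ(v) dy)/(∫ e^{-v(x+G+1)/2} dμ(v)) for x ≥ 0, assuming the denominator is positive. Then g is non-increasing in x, i.e., for 0 ≤ x₁ ≤ x₂ we have g(x₂) ≤ g(x₁). -/

import Mathlib

open MeasureTheory Set

section Aux

variable (μ : Measure ℝ) [IsFiniteMeasure μ]

lemma aux_ae_pos (hsupp : μ (Iic 0) = 0) : ∀ᵐ v ∂μ, 0 < v := by
  rw [ae_iff]
  have h : {v : ℝ | ¬ 0 < v} = Iic 0 := by ext v; simp [not_lt]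
  rw [h]; exact hsupp

lemma aux_int_exp (hsupp : μ (Iic 0) = 0) (s : ℝ) (hs : 0 ≤ s) :
    Integrable (fun v => Real.exp (-(v * s))) μ := by
  refine (integrable_const 1).mono' ?_ ?_
  · exact (Real.continuous_exp.comp (continuous_id.mul continuous_const).neg).aestronglyMeasurable
  · filter_upwards [aux_ae_pos μ hsupp] with v hv
    rw [Real.norm_eq_abs, abs_of_pos (Real.exp_pos _)]
    calc Real.exp (-(v * s)) ≤ Real.exp 0 :=
          Real.exp_le_exp.2 (neg_nonpos.2 (mul_nonneg hv.le hs))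
      _ = 1 := Real.exp_zero

lemma aux_I_nonneg (s : ℝ) : 0 ≤ ∫ v, Real.exp (-(v * s)) ∂μ :=
  integral_nonneg fun _ => (Real.exp_pos _).le

lemma aux_I_le (hsupp : μ (Iic 0) = 0) (s : ℝ) (hs : 0 ≤ s) :
    ∫ v, Real.exp (-(v * s)) ∂μ ≤ (μ univ).toReal := by
  have : ∫ v, Real.exp (-(v * s)) ∂μ ≤ ∫ _, (1:ℝ) ∂μ := by
    refine integral_mono_of_nonneg (Filter.Eventually.of_forall fun v => (Real.exp_pos _).le)
      (integrable_const 1) ?_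
    filter_upwards [aux_ae_pos μ hsupp] with v hv
    calc Real.exp (-(v * s)) ≤ Real.exp 0 :=
          Real.exp_le_exp.2 (neg_nonpos.2 (mul_nonneg hv.le hs))
      _ = 1 := Real.exp_zero
  simpa [Measure.real] using this

lemma aux_I_anti (hsupp : μ (Iic 0) = 0) {s t : ℝ} (hs : 0 ≤ s) (hst : s ≤ t) :
    ∫ v, Real.exp (-(v * t)) ∂μ ≤ ∫ v, Real.exp (-(v * s)) ∂μ := by
  refine integral_mono_of_nonneg (Filter.Eventually.of_forall fun v => (Real.exp_pos _).le)
    (aux_int_exp μ hsupp s hs) ?_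
  filter_upwards [aux_ae_pos μ hsupp] with v hv
  exact Real.exp_le_exp.2 (neg_le_neg (mul_le_mul_of_nonneg_left hst hv.le))

/-- Chebyshev / log-supermodularity of the Laplace transform. -/
lemma aux_cheb (hsupp : μ (Iic 0) = 0) (A B δ : ℝ) (hA : 0 ≤ A) (hAB : A ≤ B) (hδ : 0 ≤ δ) :
    (∫ v, Real.exp (-(v * (A + δ))) ∂μ) * (∫ v, Real.exp (-(v * B)) ∂μ) ≤
    (∫ v, Real.exp (-(v * A)) ∂μ) * (∫ v, Real.exp (-(v * (B + δ))) ∂μ) := by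
  have hB : 0 ≤ B := hA.trans hAB
  have hAδ : 0 ≤ A + δ := add_nonneg hA hδ
  have hBδ : 0 ≤ B + δ := add_nonneg hB hδ
  set IA := ∫ v, Real.exp (-(v * A)) ∂μ with hIA
  set IB := ∫ v, Real.exp (-(v * B)) ∂μ with hIB
  set IAδ := ∫ v, Real.exp (-(v * (A + δ))) ∂μ with hIAδ
  set IBδ := ∫ v, Real.exp (-(v * (B + δ))) ∂μ with hIBδ
  have iA := aux_int_exp μ hsupp A hA
  have iB := aux_int_exp μ hsupp B hB
  have iAδ := aux_int_exp μ hsupp (A + δ) hAδ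
  have iBδ := aux_int_exp μ hsupp (B + δ) hBδ
  set K : ℝ → ℝ → ℝ := fun u v =>
    (Real.exp (-(u * (A + δ))) * Real.exp (-(v * B)) +
     Real.exp (-(v * (A + δ))) * Real.exp (-(u * B))) -
    (Real.exp (-(u * A)) * Real.exp (-(v * (B + δ))) +
     Real.exp (-(v * A)) * Real.exp (-(u * (B + δ)))) with hK
  have hexp : ∀ w s t : ℝ, Real.exp (-(w * (s + t))) =
      Real.exp (-(w * s)) * Real.exp (-(w * t)) := by
    intro w s t
    rw [← Real.exp_add]
    congr 1; ring
  have hKfact : ∀ u v, K u v =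
      (Real.exp (-(u * A)) * Real.exp (-(v * B)) -
       Real.exp (-(v * A)) * Real.exp (-(u * B))) *
      (Real.exp (-(u * δ)) - Real.exp (-(v * δ))) := by
    intro u v
    simp only [hK, hexp]
    ring
  have hKle : ∀ u v, K u v ≤ 0 := by
    intro u v
    rw [hKfact]
    rcases le_total u v with h | h
    · apply mul_nonpos_of_nonpos_of_nonneg
      · rw [sub_nonpos, ← Real.exp_add, ← Real.exp_add]
        apply Real.exp_le_exp.2
        nlinarith [mul_nonneg (sub_nonneg.2 h) (sub_nonneg.2 hAB)]
      · rw [sub_nonneg]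
        exact Real.exp_le_exp.2 (by nlinarith)
    · apply mul_nonpos_of_nonneg_of_nonpos
      · rw [sub_nonneg, ← Real.exp_add, ← Real.exp_add]
        apply Real.exp_le_exp.2
        nlinarith [mul_nonneg (sub_nonneg.2 h) (sub_nonneg.2 hAB)]
      · rw [sub_nonpos]
        exact Real.exp_le_exp.2 (by nlinarith)
  have hinner : ∀ u : ℝ, ∫ v, K u v ∂μ =
      (Real.exp (-(u * (A + δ))) * IB + IAδ * Real.exp (-(u * B))) -
      (Real.exp (-(u * A)) * IBδ + IA * Real.exp (-(u * (B + δ)))) := by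
    intro u
    simp only [hK]
    have h1 : Integrable (fun v => Real.exp (-(u * (A + δ))) * Real.exp (-(v * B)) +
        Real.exp (-(v * (A + δ))) * Real.exp (-(u * B))) μ :=
      (iB.const_mul _).add (iAδ.mul_const _)
    have h2 : Integrable (fun v => Real.exp (-(u * A)) * Real.exp (-(v * (B + δ))) +
        Real.exp (-(v * A)) * Real.exp (-(u * (B + δ)))) μ :=
      (iBδ.const_mul _).add (iA.mul_const _)
    rw [integral_sub h1 h2,
      integral_add (iB.const_mul _) (iAδ.mul_const _),
      integral_add (iBδ.const_mul _) (iA.mul_const _),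
      integral_const_mul, integral_mul_const, integral_const_mul, integral_mul_const]
  have hkey : ∫ u, ∫ v, K u v ∂μ ∂μ = (IAδ * IB + IAδ * IB) - (IA * IBδ + IA * IBδ) := by
    rw [show (fun u => ∫ v, K u v ∂μ) = fun u =>
        (Real.exp (-(u * (A + δ))) * IB + IAδ * Real.exp (-(u * B))) -
        (Real.exp (-(u * A)) * IBδ + IA * Real.exp (-(u * (B + δ)))) from funext hinner]
    have h1 : Integrable (fun u => Real.exp (-(u * (A + δ))) * IB +
        IAδ * Real.exp (-(u * B))) μ :=
      (iAδ.mul_const _).add (iB.const_mul _)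
    have h2 : Integrable (fun u => Real.exp (-(u * A)) * IBδ +
        IA * Real.exp (-(u * (B + δ)))) μ :=
      (iA.mul_const _).add (iBδ.const_mul _)
    rw [integral_sub h1 h2,
      integral_add (iAδ.mul_const _) (iB.const_mul _),
      integral_add (iA.mul_const _) (iBδ.const_mul _),
      integral_mul_const, integral_const_mul, integral_mul_const, integral_const_mul]
  have hneg : ∫ u, ∫ v, K u v ∂μ ∂μ ≤ 0 :=
    integral_nonpos fun u => integral_nonpos fun v => hKle u v
  rw [hkey] at hneg
  linarith

end Aux

theorem stmt_17 (β G : ℝ) (hβ : 0 < β) (hG : 0 < G)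
    (μ : Measure ℝ) [IsFiniteMeasure μ] (hsupp : μ (Iic 0) = 0)
    (g : ℝ → ℝ)
    (hg : ∀ x ≥ 0, g x =
      (∫ y in (0:ℝ)..G, ∫ v, y ^ β * Real.exp (-v * (x + y + 1) / 2) ∂μ) /
      (∫ v, Real.exp (-v * (x + G + 1) / 2) ∂μ))
    (hden : ∀ x ≥ 0, 0 < ∫ v, Real.exp (-v * (x + G + 1) / 2) ∂μ) :
    ∀ x₁ x₂ : ℝ, 0 ≤ x₁ → x₁ ≤ x₂ → g x₂ ≤ g x₁ := by
  intro x₁ x₂ hx₁ h12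
  have hx₂ : 0 ≤ x₂ := hx₁.trans h12
  -- rewriting of exponents
  have hrw : ∀ v c : ℝ, Real.exp (-v * c / 2) = Real.exp (-(v * (c / 2))) := by
    intro v c; congr 1; ring
  -- the antitone truncated Laplace transform
  set J : ℝ → ℝ := fun s => ∫ v, Real.exp (-(v * max s 0)) ∂μ with hJ
  have hJanti : Antitone J := by
    intro s t hst
    exact aux_I_anti μ hsupp (le_max_right s 0) (max_le_max hst le_rfl)
  have hJnonneg : ∀ s, 0 ≤ J s := fun s => aux_I_nonneg μ _
  have hJle : ∀ s, J s ≤ (μ univ).toReal := fun s =>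
    aux_I_le μ hsupp _ (le_max_right _ 0)
  -- continuity of rpow
  have hrpow : Continuous fun y : ℝ => y ^ β :=
    continuous_iff_continuousAt.2 fun y => Real.continuousAt_rpow_const y β (Or.inr hβ.le)
  -- identification of the inner integral
  have hid : ∀ x y : ℝ, 0 ≤ x → 0 ≤ y →
      (∫ v, y ^ β * Real.exp (-v * (x + y + 1) / 2) ∂μ) =
        y ^ β * J ((x + y + 1) / 2) := by
    intro x y hx hy
    rw [integral_const_mul]
    congr 1
    refine integral_congr_ae (Filter.Eventually.of_forall fun v => ?_)
    show Real.exp (-v * (x + y + 1) / 2) = Real.exp (-(v * ((x + y + 1) / 2 ⊔ 0)))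
    rw [max_eq_left (by positivity : (0:ℝ) ≤ (x + y + 1) / 2)]
    congr 1; ring
  -- interval integrability
  have hII : ∀ x c : ℝ, 0 ≤ x →
      IntervalIntegrable
        (fun y => (∫ v, y ^ β * Real.exp (-v * (x + y + 1) / 2) ∂μ) * c) volume 0 G := by
    intro x c hx
    rw [intervalIntegrable_iff_integrableOn_Ioc_of_le hG.le]
    have hmeas : AEStronglyMeasurable
        (fun y => (y ^ β * J ((x + y + 1) / 2)) * c) (volume.restrict (Ioc 0 G)) := by
      refine (((hrpow.measurable).mul
        (hJanti.measurable.comp (by fun_prop : Measurable fun y : ℝ => (x + y + 1) / 2))).mul_const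
        c).aestronglyMeasurable
    have hint : IntegrableOn (fun y => (y ^ β * J ((x + y + 1) / 2)) * c) (Ioc 0 G) := by
      have hC : IntegrableOn (fun _ : ℝ => G ^ β * (μ univ).toReal * |c|)
          (Ioc 0 G) volume := integrableOn_const measure_Ioc_lt_top.ne
      refine hC.mono' hmeas ?_
      filter_upwards [ae_restrict_mem measurableSet_Ioc] with y hy
      have hy0 : 0 < y := hy.1
      have hyG : y ≤ G := hy.2
      rw [Real.norm_eq_abs, abs_mul, abs_mul, abs_of_nonneg (Real.rpow_nonneg hy0.le β),
        abs_of_nonneg (hJnonneg _)]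
      gcongr <;>
        first
          | exact hJnonneg _
          | exact hJle _
          | exact Real.rpow_le_rpow hy0.le hyG hβ.le
    refine hint.congr ?_
    filter_upwards [ae_restrict_mem measurableSet_Ioc] with y hy
    rw [hid x y hx hy.1.le]
  rw [hg x₂ hx₂, hg x₁ hx₁, div_le_div_iff₀ (hden x₂ hx₂) (hden x₁ hx₁),
    ← intervalIntegral.integral_mul_const, ← intervalIntegral.integral_mul_const]
  refine intervalIntegral.integral_mono_on hG.le (hII x₂ _ hx₂) (hII x₁ _ hx₁) ?_
  intro y hy
  obtain ⟨hy0, hyG⟩ := hy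
  rw [hid x₂ y hx₂ hy0, hid x₁ y hx₁ hy0]
  have hD : ∀ x : ℝ, 0 ≤ x → (∫ v, Real.exp (-v * (x + G + 1) / 2) ∂μ) =
      J ((x + G + 1) / 2) := by
    intro x hx
    refine integral_congr_ae (Filter.Eventually.of_forall fun v => ?_)
    show Real.exp (-v * (x + G + 1) / 2) = Real.exp (-(v * ((x + G + 1) / 2 ⊔ 0)))
    rw [max_eq_left (by positivity : (0:ℝ) ≤ (x + G + 1) / 2)]
    congr 1; ring
  rw [hD x₁ hx₁, hD x₂ hx₂]
  have key : J ((x₂ + y + 1) / 2) * J ((x₁ + G + 1) / 2) ≤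
      J ((x₁ + y + 1) / 2) * J ((x₂ + G + 1) / 2) := by
    have e1 : (x₂ + y + 1) / 2 = (x₁ + y + 1) / 2 + (x₂ - x₁) / 2 := by ring
    have e2 : (x₂ + G + 1) / 2 = (x₁ + G + 1) / 2 + (x₂ - x₁) / 2 := by ring
    have m1 : max ((x₂ + y + 1) / 2) 0 = (x₁ + y + 1) / 2 + (x₂ - x₁) / 2 := by
      rw [max_eq_left (by positivity), e1]
    have m2 : max ((x₁ + y + 1) / 2) 0 = (x₁ + y + 1) / 2 := max_eq_left (by positivity)
    have m3 : max ((x₁ + G + 1) / 2) 0 = (x₁ + G + 1) / 2 := max_eq_left (by positivity)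
    have m4 : max ((x₂ + G + 1) / 2) 0 = (x₁ + G + 1) / 2 + (x₂ - x₁) / 2 := by
      rw [max_eq_left (by positivity), e2]
    simp only [hJ, m1, m2, m3, m4]
    exact aux_cheb μ hsupp ((x₁ + y + 1) / 2) ((x₁ + G + 1) / 2) ((x₂ - x₁) / 2)
      (by positivity) (by linarith) (by linarith)
  calc y ^ β * J ((x₂ + y + 1) / 2) * J ((x₁ + G + 1) / 2)
      = y ^ β * (J ((x₂ + y + 1) / 2) * J ((x₁ + G + 1) / 2)) := by ring
    _ ≤ y ^ β * (J ((x₁ + y + 1) / 2) * J ((x₂ + G + 1) / 2)) :=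
        mul_le_mul_of_nonneg_left key (Real.rpow_nonneg hy0 β)
    _ = y ^ β * J ((x₁ + y + 1) / 2) * J ((x₂ + G + 1) / 2) := by ring
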